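/- For ξ ~ Multinomial(m, x) and distinct indices i ≠ ℓ, the joint fourth central moment satisfies E[(ξ_i − m x_i)^2 (ξ_ℓ − m x_ℓ)^2] = (3 m^2 − 6 m) x_i^2 x_ℓ^2 + m^2 (x_i^2 x_ℓ + x_i x_ℓ^2) − (2 m^2 − 2 m)(x_i^2 x_ℓ + x_i x_ℓ^2) + (m^2 − m) x_i x_ℓ. -/

import Mathlib

open Finset

/-- The probability mass function of the Multinomial(m, x) distribution on the
d-dimensional simplex, evaluated at k ∈ ℕ₀^d. -/
noncomputable def multinomialPMF (d m : ℕ) (x : Fin d → ℝ) (k : Fin d → ℕ) : ℝ :=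
  (Nat.factorial m : ℝ) /
      ((Nat.factorial (m - ∑ i, k i) : ℝ) * ∏ i, (Nat.factorial (k i) : ℝ)) *
    (1 - ∑ i, x i) ^ (m - ∑ i, k i) * ∏ i, x i ^ k i

/-- Expectation of f(ξ) for ξ ~ Multinomial(m, x): the sum of f(k) * P(ξ = k)
over all k ∈ ℕ₀^d with ∑ i, k i ≤ m. -/
noncomputable def multinomialExp (d m : ℕ) (x : Fin d → ℝ) (f : (Fin d → ℕ) → ℝ) : ℝ :=
  ∑ k ∈ Finset.univ.filter (fun k : Fin d → Fin (m + 1) => ∑ i, (k i : ℕ) ≤ m),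
    f (fun i => (k i : ℕ)) * multinomialPMF d m x (fun i => (k i : ℕ))


namespace MFC

def D (d n : ℕ) : Finset (Fin d → ℕ) :=
  (Fintype.piFinset fun _ : Fin d => Finset.range (n+1)).filter (fun k => ∑ i, k i ≤ n)

lemma mem_D {d n : ℕ} {k : Fin d → ℕ} : k ∈ D d n ↔ ∑ i, k i ≤ n := by
  constructor
  · intro h; exact (Finset.mem_filter.1 h).2
  · intro h
    refine Finset.mem_filter.2 ⟨Fintype.mem_piFinset.2 fun i => ?_, h⟩
    exact Finset.mem_range.2 (lt_of_le_of_lt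
      (Finset.single_le_sum (fun j _ => Nat.zero_le _) (Finset.mem_univ i))
      (Nat.lt_succ_of_le h))

lemma exp_eq_sum_D (d m : ℕ) (x : Fin d → ℝ) (f : (Fin d → ℕ) → ℝ) :
    multinomialExp d m x f = ∑ k ∈ D d m, f k * multinomialPMF d m x k := by
  unfold multinomialExp
  refine Finset.sum_nbij' (i := fun k => fun i => (k i : ℕ))
    (j := fun k => fun i => (⟨k i % (m+1), Nat.mod_lt _ (Nat.succ_pos m)⟩ : Fin (m+1)))
    ?_ ?_ ?_ ?_ ?_
  · intro k hk
    exact mem_D.2 (Finset.mem_filter.1 hk).2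
  · intro k hk
    refine Finset.mem_filter.2 ⟨Finset.mem_univ _, ?_⟩
    have hk' := mem_D.1 hk
    have : ∀ i, k i % (m+1) = k i := fun i => Nat.mod_eq_of_lt (lt_of_le_of_lt
      (Finset.single_le_sum (fun j _ => Nat.zero_le _) (Finset.mem_univ i))
      (Nat.lt_succ_of_le hk'))
    simpa [this] using hk'
  · intro k hk
    funext j
    exact Fin.ext (Nat.mod_eq_of_lt (k j).isLt)
  · intro k hk
    funext j
    have hk' := mem_D.1 hk
    exact Nat.mod_eq_of_lt (lt_of_le_of_lt
      (Finset.single_le_sum (fun j' _ => Nat.zero_le _) (Finset.mem_univ j))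
      (Nat.lt_succ_of_le hk'))
  · intro k hk; rfl

lemma sum_pmf_D (d n : ℕ) (x : Fin d → ℝ) :
    ∑ k ∈ D d n, multinomialPMF d n x k = 1 := by
  have key := Finset.sum_pow_eq_sum_piAntidiag (univ : Finset (Fin (d+1)))
    (Fin.snoc x (1 - ∑ i, x i)) n
  have hsum : ∑ j : Fin (d+1), Fin.snoc x (1 - ∑ i, x i) j = 1 := by
    rw [Fin.sum_univ_castSucc]
    simp [Fin.snoc_castSucc, Fin.snoc_last]
  rw [hsum, one_pow] at key
  have main : ∑ g ∈ piAntidiag (univ : Finset (Fin (d+1))) n,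
      (Nat.multinomial univ g : ℝ) * ∏ j, Fin.snoc x (1 - ∑ i, x i) j ^ g j
      = ∑ k ∈ D d n, multinomialPMF d n x k := by
    refine Finset.sum_nbij' (i := fun g => Fin.init g)
      (j := fun k => Fin.snoc k (n - ∑ i, k i)) ?_ ?_ ?_ ?_ ?_
    · intro g hg
      rw [Finset.mem_piAntidiag] at hg
      refine mem_D.2 ?_
      have := hg.1
      rw [Fin.sum_univ_castSucc] at this
      have : ∑ i : Fin d, g (Fin.castSucc i) ≤ n := by omega
      exact this
    · intro k hk
      rw [Finset.mem_piAntidiag]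
      refine ⟨?_, fun _ _ => Finset.mem_univ _⟩
      rw [Fin.sum_univ_castSucc]
      simp only [Fin.snoc_castSucc, Fin.snoc_last]
      have := mem_D.1 hk
      omega
    · intro g hg
      rw [Finset.mem_piAntidiag] at hg
      have hlast : g (Fin.last d) = n - ∑ i : Fin d, g (Fin.castSucc i) := by
        have := hg.1; rw [Fin.sum_univ_castSucc] at this; omega
      funext j
      refine Fin.lastCases ?_ ?_ j
      · show Fin.snoc (Fin.init g) (n - ∑ i : Fin d, Fin.init g i) (Fin.last d) = _
        rw [Fin.snoc_last, hlast]
        rfl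
      · intro j'
        simp [Fin.snoc_castSucc, Fin.init]
    · intro k hk
      exact Fin.init_snoc _ _
    · intro g hg
      rw [Finset.mem_piAntidiag] at hg
      have hsumg := hg.1
      rw [Fin.sum_univ_castSucc] at hsumg
      set t := ∑ i : Fin d, g (Fin.castSucc i) with ht
      have hlast : g (Fin.last d) = n - t := by omega
      have htn : t ≤ n := by omega
      have hinitsum : ∑ i : Fin d, Fin.init g i = t := rfl
      unfold multinomialPMF
      rw [hinitsum]
      have hmult : ((∏ j, Nat.factorial (g j) : ℕ) : ℝ) * (Nat.multinomial univ g : ℝ)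
          = (Nat.factorial n : ℝ) := by
        rw [← Nat.cast_mul, Nat.multinomial_spec, hg.1]
      have hprodfact : (∏ j, (Nat.factorial (g j) : ℝ))
          = (∏ i : Fin d, (Nat.factorial (Fin.init g i) : ℝ)) * (Nat.factorial (n - t) : ℝ) := by
        rw [Fin.prod_univ_castSucc, hlast]; rfl
      have hprodpow : (∏ j, Fin.snoc x (1 - ∑ i, x i) j ^ g j)
          = (∏ i : Fin d, x i ^ Fin.init g i) * (1 - ∑ i, x i) ^ (n - t) := by
        rw [Fin.prod_univ_castSucc, hlast]
        simp [Fin.snoc_castSucc, Fin.snoc_last, Fin.init]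
      rw [hprodpow]
      have hne : (∏ i : Fin d, (Nat.factorial (Fin.init g i) : ℝ)) ≠ 0 := by
        refine Finset.prod_ne_zero_iff.2 fun i _ => ?_
        exact_mod_cast (Nat.factorial_pos _).ne'
      have hne2 : (Nat.factorial (n - t) : ℝ) ≠ 0 := by
        exact_mod_cast (Nat.factorial_pos _).ne'
      have hmult' : (Nat.multinomial univ g : ℝ)
          = (Nat.factorial n : ℝ) /
            ((Nat.factorial (n - t) : ℝ) * ∏ i : Fin d, (Nat.factorial (Fin.init g i) : ℝ)) := by
        rw [eq_div_iff (by positivity)]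
        rw [← hmult]
        push_cast
        rw [hprodfact]
        ring
      rw [hmult']
      ring
  rw [← main]; exact key.symm

lemma prod_split {d : ℕ} {i ℓ : Fin d} (hil : i ≠ ℓ) (F : Fin d → ℝ) :
    ∏ j, F j = F i * F ℓ * ∏ j ∈ (univ.erase i).erase ℓ, F j := by
  rw [← Finset.mul_prod_erase univ F (mem_univ i),
    ← Finset.mul_prod_erase (univ.erase i) F (Finset.mem_erase.2 ⟨hil.symm, mem_univ ℓ⟩),
    ← mul_assoc]

lemma term_id (d m : ℕ) (x : Fin d → ℝ) (i ℓ : Fin d) (hil : i ≠ ℓ) (r s : ℕ)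
    (hm : r + s ≤ m) (k' : Fin d → ℕ) (ht' : ∑ j, k' j ≤ m - (r+s))
    (k : Fin d → ℕ)
    (hk : k = fun j => k' j + (if j = i then r else 0) + (if j = ℓ then s else 0)) :
    (((k i).descFactorial r : ℝ) * ((k ℓ).descFactorial s)) * multinomialPMF d m x k
      = (m.descFactorial (r+s) : ℝ) * x i ^ r * x ℓ ^ s * multinomialPMF d (m - (r+s)) x k' := by
  set n := m - (r + s) with hn
  set t := ∑ j, k' j with htdef
  have hki : k i = k' i + r := by rw [hk]; simp [hil]
  have hkl : k ℓ = k' ℓ + s := by rw [hk]; simp [hil.symm, hil]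
  have hkj : ∀ j ∈ (univ.erase i).erase ℓ, k j = k' j := by
    intro j hj
    have h1 := Finset.mem_erase.1 hj
    have h2 := Finset.mem_erase.1 h1.2
    rw [hk]; simp [h2.1, h1.1]
  have hsumk : ∑ j, k j = t + r + s := by
    rw [hk, Finset.sum_add_distrib, Finset.sum_add_distrib]
    simp [Finset.sum_ite_eq']
    exact htdef.symm
  have hmt : m - (t + r + s) = n - t := by omega
  unfold multinomialPMF
  rw [hsumk, hmt, show (∑ j, k' j) = t from rfl]
  rw [prod_split hil (fun j => ((k j).factorial : ℝ)),
      prod_split hil (fun j => x j ^ k j),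
      prod_split hil (fun j => ((k' j).factorial : ℝ)),
      prod_split hil (fun j => x j ^ k' j)]
  simp only [hki, hkl]
  have hp1 : ∏ j ∈ (univ.erase i).erase ℓ, ((k j).factorial : ℝ)
      = ∏ j ∈ (univ.erase i).erase ℓ, ((k' j).factorial : ℝ) :=
    Finset.prod_congr rfl (fun j hj => by rw [hkj j hj])
  have hp2 : ∏ j ∈ (univ.erase i).erase ℓ, x j ^ k j
      = ∏ j ∈ (univ.erase i).erase ℓ, x j ^ k' j :=
    Finset.prod_congr rfl (fun j hj => by rw [hkj j hj])
  rw [hp1, hp2]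
  have hfne : ∀ a : ℕ, ((a.factorial : ℝ) ≠ 0) := fun a =>
    Nat.cast_ne_zero.2 (Nat.factorial_ne_zero a)
  have hPne : (∏ j ∈ (univ.erase i).erase ℓ, ((k' j).factorial : ℝ)) ≠ 0 :=
    Finset.prod_ne_zero_iff.2 fun j _ => hfne _
  have hfac1 : ((k' i + r).descFactorial r : ℝ)
      = ((k' i + r).factorial : ℝ) / ((k' i).factorial : ℝ) := by
    rw [eq_div_iff (hfne _), ← Nat.cast_mul]
    norm_cast
    rw [mul_comm]
    simpa [Nat.add_sub_cancel] using
      Nat.factorial_mul_descFactorial (Nat.le_add_left r (k' i))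
  have hfac2 : ((k' ℓ + s).descFactorial s : ℝ)
      = ((k' ℓ + s).factorial : ℝ) / ((k' ℓ).factorial : ℝ) := by
    rw [eq_div_iff (hfne _), ← Nat.cast_mul]
    norm_cast
    rw [mul_comm]
    simpa [Nat.add_sub_cancel] using
      Nat.factorial_mul_descFactorial (Nat.le_add_left s (k' ℓ))
  have hfacm : (m.descFactorial (r+s) : ℝ)
      = (m.factorial : ℝ) / (n.factorial : ℝ) := by
    rw [eq_div_iff (hfne _), ← Nat.cast_mul]
    norm_cast
    rw [mul_comm]
    exact Nat.factorial_mul_descFactorial hm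
  rw [hfac1, hfac2, hfacm, pow_add (x i), pow_add (x ℓ)]
  field_simp

lemma moment (d m : ℕ) (x : Fin d → ℝ) (i ℓ : Fin d) (hil : i ≠ ℓ) (r s : ℕ) :
    ∑ k ∈ D d m, (((k i).descFactorial r : ℝ) * ((k ℓ).descFactorial s)) * multinomialPMF d m x k
      = (m.descFactorial (r+s) : ℝ) * x i ^ r * x ℓ ^ s := by
  by_cases hm : m < r + s
  · rw [Nat.descFactorial_eq_zero_iff_lt.2 hm]
    rw [Finset.sum_eq_zero, Nat.cast_zero, zero_mul, zero_mul]
    intro k hk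
    have hk' := mem_D.1 hk
    have hpair : k i + k ℓ ≤ ∑ j, k j := by
      have h1 : ∑ j ∈ ({i, ℓ} : Finset (Fin d)), k j ≤ ∑ j, k j :=
        Finset.sum_le_sum_of_subset (Finset.subset_univ _)
      rwa [Finset.sum_pair hil] at h1
    have : k i < r ∨ k ℓ < s := by omega
    rcases this with h | h
    · rw [Nat.descFactorial_eq_zero_iff_lt.2 h]; push_cast; ring
    · rw [Nat.descFactorial_eq_zero_iff_lt.2 h]; push_cast; ring
  · push_neg at hm
    set n := m - (r + s) with hn
    rw [← Finset.sum_filter_add_sum_filter_not (D d m) (fun k => r ≤ k i ∧ s ≤ k ℓ)]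
    have hzero : ∑ k ∈ (D d m).filter (fun k => ¬(r ≤ k i ∧ s ≤ k ℓ)),
        (((k i).descFactorial r : ℝ) * ((k ℓ).descFactorial s)) * multinomialPMF d m x k = 0 := by
      refine Finset.sum_eq_zero fun k hk => ?_
      have hk2 := (Finset.mem_filter.1 hk).2
      push_neg at hk2
      by_cases h : r ≤ k i
      · rw [Nat.descFactorial_eq_zero_iff_lt.2 (by omega : k ℓ < s)]; push_cast; ring
      · rw [Nat.descFactorial_eq_zero_iff_lt.2 (by omega : k i < r)]; push_cast; ring
    rw [hzero, add_zero]
    have hbij : ∑ k' ∈ D d n,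
          (m.descFactorial (r+s) : ℝ) * x i ^ r * x ℓ ^ s * multinomialPMF d n x k'
        = ∑ k ∈ (D d m).filter (fun k => r ≤ k i ∧ s ≤ k ℓ),
            (((k i).descFactorial r : ℝ) * ((k ℓ).descFactorial s)) * multinomialPMF d m x k := by
      refine Finset.sum_nbij'
        (i := fun k' => fun j => k' j + (if j = i then r else 0) + (if j = ℓ then s else 0))
        (j := fun k => fun j => k j - (if j = i then r else 0) - (if j = ℓ then s else 0))
        ?_ ?_ ?_ ?_ ?_
      · intro k' hk'
        have hk'D := mem_D.1 hk'
        have hsplit : ∑ j, (k' j + (if j = i then r else 0) + (if j = ℓ then s else 0))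
            = (∑ j, k' j) + r + s := by
          rw [Finset.sum_add_distrib, Finset.sum_add_distrib]
          simp [Finset.sum_ite_eq']
        refine Finset.mem_filter.2 ⟨mem_D.2 (by rw [hsplit]; omega), ?_, ?_⟩
        · simp [hil]
        · simp [hil.symm, hil]
      · intro k hk
        have h1 := Finset.mem_filter.1 hk
        have hkD := mem_D.1 h1.1
        have hki := h1.2.1
        have hkl := h1.2.2
        refine mem_D.2 ?_
        have h2 : ∑ j, ((k j - (if j = i then r else 0) - (if j = ℓ then s else 0))
              + (if j = i then r else 0) + (if j = ℓ then s else 0)) = ∑ j, k j := by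
          refine Finset.sum_congr rfl fun j _ => ?_
          by_cases hji : j = i
          · subst hji; simp [hil]; omega
          · by_cases hjl : j = ℓ
            · subst hjl; simp [hil.symm, hji]; omega
            · simp [hji, hjl]
        rw [Finset.sum_add_distrib, Finset.sum_add_distrib] at h2
        simp only [Finset.sum_ite_eq', Finset.mem_univ, if_true] at h2
        refine Nat.le_sub_of_add_le ?_
        show (∑ j, (k j - (if j = i then r else 0) - (if j = ℓ then s else 0))) + (r + s) ≤ m
        rw [← add_assoc, h2]
        exact hkD
      · intro k' hk'
        funext j
        by_cases hji : j = i
        · subst hji; simp [hil]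
        · by_cases hjl : j = ℓ
          · subst hjl; simp [hil.symm, hji]
          · simp [hji, hjl]
      · intro k hk
        have h1 := Finset.mem_filter.1 hk
        have hki := h1.2.1
        have hkl := h1.2.2
        funext j
        by_cases hji : j = i
        · subst hji; simp [hil]; omega
        · by_cases hjl : j = ℓ
          · subst hjl; simp [hil.symm, hji]; omega
          · simp [hji, hjl]
      · intro k' hk'
        exact (term_id d m x i ℓ hil r s hm k' (mem_D.1 hk') _ rfl).symm
    rw [← hbij, ← Finset.mul_sum, sum_pmf_D, mul_one]

lemma df2_cast (a : ℕ) : ((a.descFactorial 2 : ℕ) : ℝ) = (a:ℝ)^2 - a := by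
  rcases a with _ | a
  · simp
  · simp only [Nat.descFactorial_succ, Nat.descFactorial_zero, Nat.descFactorial_one]
    push_cast [Nat.succ_sub_one]
    ring

lemma df3_cast (a : ℕ) : ((a.descFactorial 3 : ℕ) : ℝ) = (a:ℝ)^3 - 3*(a:ℝ)^2 + 2*a := by
  rcases a with _ | _ | a
  · simp
  · norm_num [Nat.descFactorial]
  · simp only [Nat.descFactorial_succ, Nat.descFactorial_zero, Nat.descFactorial_one]
    push_cast [Nat.succ_sub_one]
    ring

lemma df4_cast (a : ℕ) : ((a.descFactorial 4 : ℕ) : ℝ)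
    = (a:ℝ)^4 - 6*(a:ℝ)^3 + 11*(a:ℝ)^2 - 6*a := by
  rcases a with _ | _ | _ | a
  · simp
  · norm_num [Nat.descFactorial]
  · norm_num [Nat.descFactorial]
  · simp only [Nat.descFactorial_succ, Nat.descFactorial_zero, Nat.descFactorial_one]
    push_cast [Nat.succ_sub_one]
    ring

end MFC


open MFC

theorem multinomial_fourth_central_moment_two_two (d m : ℕ) (x : Fin d → ℝ) (hx : ∀ i, 0 ≤ x i ∧ x i ≤ 1)
    (hs : ∑ i, x i ≤ 1) (i ℓ : Fin d)
    (hil : i ≠ ℓ) :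
    multinomialExp d m x
        (fun k => ((k i : ℝ) - (m : ℝ) * x i) ^ 2 * ((k ℓ : ℝ) - (m : ℝ) * x ℓ) ^ 2) =
      (3 * (m : ℝ) ^ 2 - 6 * (m : ℝ)) * x i ^ 2 * x ℓ ^ 2 +
        (m : ℝ) ^ 2 * (x i ^ 2 * x ℓ + x i * x ℓ ^ 2) -
        (2 * (m : ℝ) ^ 2 - 2 * (m : ℝ)) * (x i ^ 2 * x ℓ + x i * x ℓ ^ 2) +
        ((m : ℝ) ^ 2 - (m : ℝ)) * x i * x ℓ := by
  rw [exp_eq_sum_D]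
  set c : ℝ := (m : ℝ) * x i with hc
  set e : ℝ := (m : ℝ) * x ℓ with he
  have expand : ∀ k ∈ D d m,
      ((k i : ℝ) - c) ^ 2 * ((k ℓ : ℝ) - e) ^ 2 * multinomialPMF d m x k
      = 1 * ((((k i).descFactorial 2 : ℝ) * ((k ℓ).descFactorial 2)) * multinomialPMF d m x k)
      + (1 - 2*e) * ((((k i).descFactorial 2 : ℝ) * ((k ℓ).descFactorial 1)) * multinomialPMF d m x k)
      + e^2 * ((((k i).descFactorial 2 : ℝ) * ((k ℓ).descFactorial 0)) * multinomialPMF d m x k)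
      + (1 - 2*c) * ((((k i).descFactorial 1 : ℝ) * ((k ℓ).descFactorial 2)) * multinomialPMF d m x k)
      + (1 - 2*c)*(1 - 2*e) * ((((k i).descFactorial 1 : ℝ) * ((k ℓ).descFactorial 1)) * multinomialPMF d m x k)
      + (1 - 2*c)*e^2 * ((((k i).descFactorial 1 : ℝ) * ((k ℓ).descFactorial 0)) * multinomialPMF d m x k)
      + c^2 * ((((k i).descFactorial 0 : ℝ) * ((k ℓ).descFactorial 2)) * multinomialPMF d m x k)
      + c^2*(1 - 2*e) * ((((k i).descFactorial 0 : ℝ) * ((k ℓ).descFactorial 1)) * multinomialPMF d m x k)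
      + c^2*e^2 * ((((k i).descFactorial 0 : ℝ) * ((k ℓ).descFactorial 0)) * multinomialPMF d m x k) := by
    intro k _
    rw [df2_cast, df2_cast]
    simp only [Nat.descFactorial_one, Nat.descFactorial_zero]
    push_cast
    ring
  rw [Finset.sum_congr rfl expand]
  simp only [Finset.sum_add_distrib, ← Finset.mul_sum]
  rw [moment d m x i ℓ hil 2 2, moment d m x i ℓ hil 2 1, moment d m x i ℓ hil 2 0,
      moment d m x i ℓ hil 1 2, moment d m x i ℓ hil 1 1, moment d m x i ℓ hil 1 0,
      moment d m x i ℓ hil 0 2, moment d m x i ℓ hil 0 1, moment d m x i ℓ hil 0 0]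
  norm_num only []
  simp only [show (2+2)=4 from rfl, show (2+1)=3 from rfl, show (2+0)=2 from rfl,
    show (1+2)=3 from rfl, show (1+1)=2 from rfl, show (1+0)=1 from rfl,
    show (0+2)=2 from rfl, show (0+1)=1 from rfl, show (0+0)=0 from rfl,
    df4_cast, df3_cast, df2_cast, Nat.descFactorial_one, Nat.descFactorial_zero,
    pow_zero, pow_one, Nat.cast_one]
  push_cast
  ring
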